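/- arXiv:2004.11151 — 5 statements merged into one kernel-verified Lean document; each statement's English description precedes it below -/
import Mathlib

section
/- Let T > 0, 0 ≤ μ < 1, and a, b ≥ 0. Suppose φ : (0,T] → ℝ is continuous, nonnegative, locally integrable on (0,T], and satisfies φ(t) ≤ a·t^{-μ} + b·∫₀ᵗ φ(s) ds for all 0 < t ≤ T. Then there exists a constant c depending only on b and T (independent of a and μ) such that φ(t) ≤ (a·c/(1-μ))·t^{-μ} for all 0 < t ≤ T. -/
open MeasureTheory Set

/-- Regular-kernel Gronwall inequality with singular data term `a * t^(-μ)`. -/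
theorem gronwall_singular_data
    (T b : ℝ) (hT : 0 < T) (hb : 0 ≤ b) :
    ∃ c : ℝ, 0 < c ∧
      ∀ (μ a : ℝ), 0 ≤ μ → μ < 1 → 0 ≤ a →
      ∀ φ : ℝ → ℝ,
        ContinuousOn φ (Set.Ioc 0 T) →
        (∀ t ∈ Set.Ioc (0:ℝ) T, 0 ≤ φ t) →
        (∀ t ∈ Set.Ioc (0:ℝ) T, IntegrableOn φ (Set.Ioo 0 t) volume) →
        (∀ t ∈ Set.Ioc (0:ℝ) T,
          φ t ≤ a * t ^ (-μ) + b * ∫ s in (0:ℝ)..t, φ s) →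
        ∀ t ∈ Set.Ioc (0:ℝ) T, φ t ≤ (a * c / (1 - μ)) * t ^ (-μ) := by
  refine ⟨1 + b * T * Real.exp (b * T), by positivity, ?_⟩
  intro μ a hμ0 hμ1 ha φ hcont hpos hInt hineq
  have h1μ : 0 < 1 - μ := by linarith
  set Ψ : ℝ → ℝ := fun u => ∫ s in (0:ℝ)..u, φ s with hΨdef
  have hii : ∀ s ∈ Set.Icc (0:ℝ) T, IntervalIntegrable φ volume 0 s := by
    intro s hs
    rcases eq_or_lt_of_le hs.1 with h | h
    · simp [← h]
    · rw [intervalIntegrable_iff_integrableOn_Ioo_of_le hs.1]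
      exact hInt s ⟨h, hs.2⟩
  have hΨcont : ContinuousOn Ψ (Set.Icc 0 T) := by
    have h : IntegrableOn φ (Set.uIcc (0:ℝ) T) volume := by
      rw [Set.uIcc_of_le hT.le, integrableOn_Icc_iff_integrableOn_Ioo]
      exact hInt T ⟨hT, le_refl T⟩
    simpa [Set.uIcc_of_le hT.le] using intervalIntegral.continuousOn_primitive_interval h
  have hΨderiv : ∀ u ∈ Set.Ioo (0:ℝ) T, HasDerivAt Ψ (φ u) u := by
    intro u hu
    refine intervalIntegral.integral_hasDerivAt_right (hii u ⟨hu.1.le, hu.2.le⟩) ?_ ?_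
    · exact ContinuousOn.stronglyMeasurableAtFilter isOpen_Ioo
        (hcont.mono Set.Ioo_subset_Ioc_self) u hu
    · exact (hcont.mono Set.Ioo_subset_Ioc_self).continuousAt (isOpen_Ioo.mem_nhds hu)
  set g : ℝ → ℝ := fun u => Ψ u * Real.exp (-b * u) - a / (1 - μ) * u ^ (1 - μ) with hgdef
  have hgderiv : ∀ u ∈ Set.Ioo (0:ℝ) T,
      HasDerivAt g (φ u * Real.exp (-b * u) + Ψ u * (Real.exp (-b * u) * -b)
        - a / (1 - μ) * ((1 - μ) * u ^ (1 - μ - 1))) u := by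
    intro u hu
    have h1 : HasDerivAt (fun u : ℝ => -b * u) (-b) u := by
      simpa using (hasDerivAt_id u).const_mul (-b)
    have h2 := (hΨderiv u hu).mul h1.exp
    have h3 := (Real.hasDerivAt_rpow_const (p := 1 - μ) (Or.inl hu.1.ne')).const_mul (a / (1 - μ))
    exact h2.sub h3
  have hanti : AntitoneOn g (Set.Icc 0 T) := by
    apply antitoneOn_of_deriv_nonpos (convex_Icc 0 T)
    · apply ContinuousOn.sub
      · exact hΨcont.mul (Real.continuous_exp.comp (continuous_const.mul continuous_id)).continuousOn
      · exact continuousOn_const.mul (fun u _ =>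
          (Real.continuousAt_rpow_const u (1 - μ) (Or.inr h1μ.le)).continuousWithinAt)
    · rw [interior_Icc]
      exact fun u hu => (hgderiv u hu).differentiableAt.differentiableWithinAt
    · intro u hu
      rw [interior_Icc] at hu
      rw [(hgderiv u hu).deriv]
      have hE1 : Real.exp (-b * u) ≤ 1 := by
        rw [Real.exp_le_one_iff]
        nlinarith [hu.1]
      have hE0 : (0:ℝ) < Real.exp (-b * u) := Real.exp_pos _
      have hφb : φ u - b * Ψ u ≤ a * u ^ (-μ) := by
        have := hineq u ⟨hu.1, hu.2.le⟩
        linarith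
      have hrp : (0:ℝ) ≤ a * u ^ (-μ) := mul_nonneg ha (Real.rpow_nonneg hu.1.le _)
      have hexp : u ^ (1 - μ - 1) = u ^ (-μ) := by norm_num
      rw [hexp]
      have hdiv : a / (1 - μ) * ((1 - μ) * u ^ (-μ)) = a * u ^ (-μ) := by
        field_simp
      rw [hdiv]
      nlinarith [mul_le_mul_of_nonneg_left hφb hE0.le]
  intro t ht
  have hg0 : g 0 = 0 := by
    simp [hgdef, hΨdef, Real.zero_rpow h1μ.ne']
  have hgt : g t ≤ 0 := by
    rw [← hg0]
    exact hanti ⟨le_rfl, hT.le⟩ ⟨ht.1.le, ht.2⟩ ht.1.le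
  have hΨt : Ψ t ≤ a / (1 - μ) * t ^ (1 - μ) * Real.exp (b * t) := by
    have h2 : Ψ t * Real.exp (-b * t) * Real.exp (b * t)
        ≤ a / (1 - μ) * t ^ (1 - μ) * Real.exp (b * t) := by
      have : Ψ t * Real.exp (-b * t) ≤ a / (1 - μ) * t ^ (1 - μ) := by
        have := hgt; simp only [hgdef] at this; linarith
      exact mul_le_mul_of_nonneg_right this (Real.exp_pos _).le
    rwa [mul_assoc, ← Real.exp_add, neg_mul, neg_add_cancel, Real.exp_zero, mul_one] at h2
  have hEmono : Real.exp (b * t) ≤ Real.exp (b * T) :=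
    Real.exp_le_exp.mpr (mul_le_mul_of_nonneg_left ht.2 hb)
  have ht1μ : t ^ (1 - μ) = t * t ^ (-μ) := by
    rw [show (1:ℝ) - μ = 1 + (-μ) by ring, Real.rpow_add ht.1, Real.rpow_one]
  have hP : (0:ℝ) ≤ t ^ (-μ) := Real.rpow_nonneg ht.1.le _
  have hfrac : (0:ℝ) ≤ a / (1 - μ) := div_nonneg ha h1μ.le
  have hΨt2 : Ψ t ≤ a / (1 - μ) * (t * t ^ (-μ)) * Real.exp (b * T) := by
    calc Ψ t ≤ a / (1 - μ) * t ^ (1 - μ) * Real.exp (b * t) := hΨt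
      _ ≤ a / (1 - μ) * t ^ (1 - μ) * Real.exp (b * T) := by
          apply mul_le_mul_of_nonneg_left hEmono
          exact mul_nonneg hfrac (Real.rpow_nonneg ht.1.le _)
      _ = a / (1 - μ) * (t * t ^ (-μ)) * Real.exp (b * T) := by rw [ht1μ]
  have hmain : φ t ≤ a * t ^ (-μ) + b * Ψ t := hineq t ht
  set A := a / (1 - μ) with hA
  have haA : a = A * (1 - μ) := by rw [hA]; exact (div_mul_cancel₀ a h1μ.ne').symm
  have hgoal : a * (1 + b * T * Real.exp (b * T)) / (1 - μ) = A * (1 + b * T * Real.exp (b * T)) := by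
    rw [hA]; ring
  rw [hgoal]
  have hE : (0:ℝ) < Real.exp (b * T) := Real.exp_pos _
  have hbt : b * t ≤ b * T := mul_le_mul_of_nonneg_left ht.2 hb
  calc φ t ≤ a * t ^ (-μ) + b * Ψ t := hmain
    _ ≤ a * t ^ (-μ) + b * (A * (t * t ^ (-μ)) * Real.exp (b * T)) := by
        have hΨb := hΨt2
        nlinarith [hΨt2]
    _ = A * (1 - μ) * t ^ (-μ) + A * (b * t) * t ^ (-μ) * Real.exp (b * T) := by
        rw [haA]; ring
    _ ≤ A * t ^ (-μ) + A * (b * T) * t ^ (-μ) * Real.exp (b * T) := by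
        have h1 : A * (1 - μ) * t ^ (-μ) ≤ A * t ^ (-μ) := by nlinarith [mul_nonneg (mul_nonneg hfrac hμ0) hP]
        have h2 : A * (b * t) * t ^ (-μ) * Real.exp (b * T)
            ≤ A * (b * T) * t ^ (-μ) * Real.exp (b * T) := by nlinarith [mul_nonneg (mul_nonneg (mul_nonneg hfrac (sub_nonneg.mpr hbt)) hP) hE.le]
        linarith
    _ = A * (1 + b * T * Real.exp (b * T)) * t ^ (-μ) := by ring
end

section
/- Let T > 0, N ∈ ℕ with N ≥ 1, τ = T/N and t_n = nτ for 0 ≤ n ≤ N. Let a, b ≥ 0 with b·τ < 1/2, and let 0 ≤ μ < 1. Suppose the nonnegative numbers φ¹, …, φᴺ satisfy φⁿ ≤ a·t_n^{-μ} + b·τ·∑_{j=1}^{n} φʲ for all 1 ≤ n ≤ N. Then there exists a constant c depending only on b and T such that φⁿ ≤ (a·c/(1-μ))·t_n^{-μ} for all 1 ≤ n ≤ N. -/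
lemma sum_rpow_neg_le (μ : ℝ) (hμ0 : 0 ≤ μ) (hμ1 : μ < 1) (n : ℕ) :
    (1 - μ) * ∑ j ∈ Finset.Icc 1 n, (j : ℝ) ^ (-μ) ≤ (n : ℝ) ^ (1 - μ) := by
  induction n with
  | zero => simp [Real.zero_rpow (by linarith : (1:ℝ) - μ ≠ 0)]
  | succ n ih =>
    rw [Finset.sum_Icc_succ_top (by omega : 1 ≤ n + 1)]
    have hx : (0:ℝ) < (n:ℝ) + 1 := by positivity
    have hs : (-1:ℝ) ≤ -1 / ((n:ℝ) + 1) := by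
      rw [neg_div, neg_le_neg_iff]
      exact div_le_one_of_le₀ (by linarith) hx.le
    have hbern := rpow_one_add_le_one_add_mul_self hs (p := 1 - μ) (by linarith) (by linarith)
    have h1 : 1 + -1 / ((n:ℝ) + 1) = (n:ℝ) / ((n:ℝ) + 1) := by field_simp; ring
    rw [h1] at hbern
    have h2 : ((n:ℝ) / ((n:ℝ) + 1)) ^ (1 - μ) = (n:ℝ) ^ (1 - μ) / ((n:ℝ) + 1) ^ (1 - μ) :=
      Real.div_rpow (by positivity) hx.le (1 - μ)
    rw [h2, div_le_iff₀ (Real.rpow_pos_of_pos hx _)] at hbern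
    have h3 : ((n:ℝ) + 1) ^ (1 - μ) / ((n:ℝ) + 1) = ((n:ℝ) + 1) ^ (-μ) := by
      have h := Real.rpow_sub hx (1 - μ) 1
      rw [Real.rpow_one] at h
      rw [← h, show (1 - μ) - 1 = -μ by ring]
    have h4 : (1 + (1 - μ) * (-1 / ((n:ℝ) + 1))) * ((n:ℝ) + 1) ^ (1 - μ)
        = ((n:ℝ) + 1) ^ (1 - μ) - (1 - μ) * (((n:ℝ) + 1) ^ (1 - μ) / ((n:ℝ) + 1)) := by
      ring
    rw [h4, h3] at hbern
    push_cast
    nlinarith [ih]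

set_option maxHeartbeats 1000000 in
/-- Discrete Gronwall inequality with singular data term `a * t_n^(-μ)` on the
uniform grid `t_n = n * τ`, `τ = T / N`. -/
theorem discrete_gronwall_singular
    (T b : ℝ) (hT : 0 < T) (hb : 0 ≤ b) :
    ∃ c : ℝ, 0 < c ∧
      ∀ (N : ℕ), 1 ≤ N →
      ∀ (μ a : ℝ), 0 ≤ μ → μ < 1 → 0 ≤ a →
      b * (T / N) < 1 / 2 →
      ∀ φ : ℕ → ℝ,
        (∀ n, 1 ≤ n → n ≤ N → 0 ≤ φ n) →
        (∀ n, 1 ≤ n → n ≤ N →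
          φ n ≤ a * ((n : ℝ) * (T / N)) ^ (-μ) + b * (T / N) * ∑ j ∈ Finset.Icc 1 n, φ j) →
        ∀ n, 1 ≤ n → n ≤ N →
          φ n ≤ (a * c / (1 - μ)) * ((n : ℝ) * (T / N)) ^ (-μ) := by
  refine ⟨1 + b * T * Real.exp (2 * b * T), by positivity, ?_⟩
  intro N hN μ a hμ0 hμ1 ha hbτ φ hφ0 hφ
  set τ : ℝ := T / N with hτdef
  have hNpos : (0:ℝ) < N := by exact_mod_cast Nat.pos_of_ne_zero (by omega)
  have hτ : 0 < τ := div_pos hT hNpos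
  have hτN : τ * N = T := by rw [hτdef]; field_simp
  have hbτ0 : 0 ≤ b * τ := by positivity
  set P : ℝ := 1 + 2 * b * τ with hPdef
  have hP1 : 1 ≤ P := by simp [hPdef]; positivity
  have hP0 : (0:ℝ) ≤ P := by linarith
  have hS0 : ∀ n, n ≤ N → 0 ≤ ∑ j ∈ Finset.Icc 1 n, φ j := by
    intro n hn
    refine Finset.sum_nonneg fun j hj => ?_
    rw [Finset.mem_Icc] at hj
    exact hφ0 j hj.1 (hj.2.trans hn)
  -- Gronwall induction on partial sums
  have key : ∀ n, n ≤ N →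
      ∑ j ∈ Finset.Icc 1 n, φ j ≤ P ^ n * (a * ∑ j ∈ Finset.Icc 1 n, ((j:ℝ) * τ) ^ (-μ)) := by
    intro n
    induction n with
    | zero => simp
    | succ n ih =>
      intro hn
      have hn' : n ≤ N := by omega
      have ih' := ih hn'
      have hsum := hS0 (n+1) hn
      rw [Finset.sum_Icc_succ_top (by omega : 1 ≤ n + 1)] at hsum ⊢
      rw [Finset.sum_Icc_succ_top (by omega : 1 ≤ n + 1)]
      have ht : 0 ≤ ((((n:ℕ)+1 : ℕ)):ℝ) * τ := by positivity
      have htpow : 0 ≤ ((((n:ℕ)+1 : ℕ)):ℝ) ^ (-μ) * τ ^ (-μ) := by positivity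
      have hineq := hφ (n+1) (by omega) hn
      rw [Finset.sum_Icc_succ_top (by omega : 1 ≤ n + 1)] at hineq
      set S : ℝ := ∑ j ∈ Finset.Icc 1 n, φ j with hSdef
      have hy0 : 0 ≤ (((((n:ℕ)+1 : ℕ)):ℝ) * τ) ^ (-μ) := Real.rpow_nonneg ht _
      have hS : 0 ≤ S := hS0 n hn'
      -- φ (n+1) bound gives (1 - bτ)(S + φ(n+1)) ≤ S + a * t^{-μ}
      have h1 : (1 - b * τ) * (S + φ (n+1)) ≤ S + a * (((((n:ℕ)+1 : ℕ)):ℝ) * τ) ^ (-μ) := by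
        push_cast at hineq ⊢
        nlinarith [hsum, hbτ]
      have hR0 : 0 ≤ S + a * (((((n:ℕ)+1 : ℕ)):ℝ) * τ) ^ (-μ) := by positivity
      have hPP : 1 ≤ P * (1 - b * τ) := by
        rw [hPdef]; nlinarith [hbτ, hbτ0]
      have h2 : S + φ (n+1) ≤ P * (S + a * (((((n:ℕ)+1 : ℕ)):ℝ) * τ) ^ (-μ)) := by
        nlinarith [mul_le_mul_of_nonneg_left h1 (by linarith : (0:ℝ) ≤ P), hsum,
          mul_le_mul_of_nonneg_right hPP hsum]
      have hPle : P ≤ P ^ (n+1) := le_self_pow₀ hP1 (by omega)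
      have hSig0 : 0 ≤ ∑ j ∈ Finset.Icc 1 n, ((j:ℝ) * τ) ^ (-μ) :=
        Finset.sum_nonneg fun j _ => Real.rpow_nonneg (by positivity) _
      calc S + φ (n+1) ≤ P * (S + a * (((((n:ℕ)+1 : ℕ)):ℝ) * τ) ^ (-μ)) := h2
        _ ≤ P * (P ^ n * (a * ∑ j ∈ Finset.Icc 1 n, ((j:ℝ) * τ) ^ (-μ))
              + a * (((((n:ℕ)+1 : ℕ)):ℝ) * τ) ^ (-μ)) := by
            apply mul_le_mul_of_nonneg_left _ (by linarith : (0:ℝ) ≤ P)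
            exact add_le_add_left ih' _
        _ = P ^ (n+1) * (a * ∑ j ∈ Finset.Icc 1 n, ((j:ℝ) * τ) ^ (-μ))
              + P * (a * (((((n:ℕ)+1 : ℕ)):ℝ) * τ) ^ (-μ)) := by rw [pow_succ]; ring
        _ ≤ P ^ (n+1) * (a * ∑ j ∈ Finset.Icc 1 n, ((j:ℝ) * τ) ^ (-μ))
              + P ^ (n+1) * (a * (((((n:ℕ)+1 : ℕ)):ℝ) * τ) ^ (-μ)) := by
            refine add_le_add_right (mul_le_mul_of_nonneg_right hPle (by positivity)) _
        _ = P ^ (n+1) * (a * (∑ j ∈ Finset.Icc 1 n, ((j:ℝ) * τ) ^ (-μ)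
              + (((((n:ℕ)+1 : ℕ)):ℝ) * τ) ^ (-μ))) := by ring
  -- bound on P^n
  have hPexp : ∀ n, n ≤ N → P ^ n ≤ Real.exp (2 * b * T) := by
    intro n hn
    have h1 : P ≤ Real.exp (2 * b * τ) := by
      have := Real.add_one_le_exp (2 * b * τ)
      rw [hPdef]; linarith
    calc P ^ n ≤ (Real.exp (2 * b * τ)) ^ n :=
          pow_le_pow_left₀ (by positivity) h1 n
      _ ≤ (Real.exp (2 * b * τ)) ^ N :=
          pow_le_pow_right₀ (Real.one_le_exp (by positivity)) hn
      _ = Real.exp (2 * b * τ * N) := by rw [← Real.exp_nat_mul]; ring_nf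
      _ = Real.exp (2 * b * T) := by rw [mul_assoc, hτN]
  -- final assembly
  intro n hn1 hnN
  have hineq := hφ n hn1 hnN
  have ht : (0:ℝ) < (n:ℝ) * τ := by
    have : (0:ℝ) < (n:ℝ) := by exact_mod_cast Nat.pos_of_ne_zero (by omega)
    positivity
  have htT : (n:ℝ) * τ ≤ T := by
    rw [← hτN]
    have : (n:ℝ) ≤ (N:ℝ) := by exact_mod_cast hnN
    nlinarith [hτ]
  have hsum := key n hnN
  -- rewrite sum of (jτ)^{-μ}
  have hsplit : ∑ j ∈ Finset.Icc 1 n, ((j:ℝ) * τ) ^ (-μ)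
      = (∑ j ∈ Finset.Icc 1 n, (j:ℝ) ^ (-μ)) * τ ^ (-μ) := by
    rw [Finset.sum_mul]
    refine Finset.sum_congr rfl fun j _ => ?_
    exact Real.mul_rpow (by positivity) hτ.le
  have hSig1 := sum_rpow_neg_le μ hμ0 hμ1 n
  have hSig1' : 0 ≤ ∑ j ∈ Finset.Icc 1 n, (j:ℝ) ^ (-μ) :=
    Finset.sum_nonneg fun j _ => Real.rpow_nonneg (by positivity) _
  have hττ : τ * τ ^ (-μ) = τ ^ (1 - μ) := by
    rw [show (1:ℝ) - μ = 1 + -μ by ring, Real.rpow_add hτ, Real.rpow_one]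
  have hntt : (n:ℝ) ^ (1 - μ) * τ ^ (1 - μ) = ((n:ℝ) * τ) * ((n:ℝ) * τ) ^ (-μ) := by
    rw [← Real.mul_rpow (by positivity) hτ.le,
      show (1:ℝ) - μ = 1 + -μ by ring, Real.rpow_add ht, Real.rpow_one]
  have hPn := hPexp n hnN
  set K : ℝ := Real.exp (2 * b * T) with hKdef
  have hK1 : 1 ≤ K := Real.one_le_exp (by positivity)
  set u : ℝ := ((n:ℝ) * τ) ^ (-μ) with hudef
  have hu : 0 ≤ u := Real.rpow_nonneg ht.le _
  have hS := hS0 n hnN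
  have hPn0 : (0:ℝ) ≤ P ^ n := pow_nonneg hP0 n
  -- (1-μ) * (bτ * S_n) ≤ a*b*T*K*u
  have hmain : (1 - μ) * (b * τ * ∑ j ∈ Finset.Icc 1 n, φ j) ≤ a * (b * T * K) * u := by
    calc (1 - μ) * (b * τ * ∑ j ∈ Finset.Icc 1 n, φ j)
        ≤ (1 - μ) * (b * τ * (P ^ n * (a * ∑ j ∈ Finset.Icc 1 n, ((j:ℝ) * τ) ^ (-μ)))) := by
          apply mul_le_mul_of_nonneg_left _ (by linarith)
          exact mul_le_mul_of_nonneg_left hsum hbτ0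
      _ = (b * P ^ n * a) * (((1 - μ) * ∑ j ∈ Finset.Icc 1 n, (j:ℝ) ^ (-μ)) * (τ * τ ^ (-μ))) := by
          rw [hsplit]; ring
      _ ≤ (b * P ^ n * a) * ((n:ℝ) ^ (1 - μ) * τ ^ (1 - μ)) := by
          rw [hττ]
          apply mul_le_mul_of_nonneg_left _ (mul_nonneg (mul_nonneg hb hPn0) ha)
          exact mul_le_mul_of_nonneg_right hSig1 (Real.rpow_nonneg hτ.le _)
      _ = (b * P ^ n * a) * (((n:ℝ) * τ) * u) := by rw [hntt]
      _ ≤ (b * K * a) * (T * u) := by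
          have h1 : b * P ^ n * a ≤ b * K * a := by
            apply mul_le_mul_of_nonneg_right _ ha
            exact mul_le_mul_of_nonneg_left hPn hb
          have h2 : ((n:ℝ) * τ) * u ≤ T * u := mul_le_mul_of_nonneg_right htT hu
          exact mul_le_mul h1 h2 (mul_nonneg ht.le hu) (mul_nonneg (mul_nonneg hb (Real.exp_pos _).le) ha)
      _ = a * (b * T * K) * u := by ring
  have hgoal : (1 - μ) * φ n ≤ a * (1 + b * T * K) * u := by
    have h6 : (1 - μ) * (a * u) ≤ a * u := by
      calc (1 - μ) * (a * u) ≤ 1 * (a * u) :=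
            mul_le_mul_of_nonneg_right (by linarith) (mul_nonneg ha hu)
        _ = a * u := one_mul _
    calc (1 - μ) * φ n
        ≤ (1 - μ) * (a * u + b * τ * ∑ j ∈ Finset.Icc 1 n, φ j) :=
          mul_le_mul_of_nonneg_left hineq (by linarith)
      _ = (1 - μ) * (a * u) + (1 - μ) * (b * τ * ∑ j ∈ Finset.Icc 1 n, φ j) := by ring
      _ ≤ a * u + a * (b * T * K) * u := add_le_add h6 hmain
      _ = a * (1 + b * T * K) * u := by ring
  rw [div_mul_eq_mul_div, le_div_iff₀ (by linarith : (0:ℝ) < 1 - μ)]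
  calc φ n * (1 - μ) = (1 - μ) * φ n := by ring
    _ ≤ a * (1 + b * T * K) * u := hgoal
    _ = a * (1 + b * T * Real.exp (2 * b * T)) * ((n:ℝ) * τ) ^ (-μ) := by rw [hKdef, hudef]
end

section
/- Let α ∈ (0,1) and β ∈ (0,1/2). There exists a constant c depending only on α and β such that for every τ > 0, every integer m ≥ 1 and every s ∈ [0, t_m) (where t_k = kτ), one has τ·∑_{k=1}^{m} t_{m-k+1}^{βα-1}·(t_{k+1} - s)^{(1-2β)α-1}·χ_{[0,t_k]}(s) ≤ c·(t_m - s)^{(1-β)α-1}, where χ_{[0,t_k]} denotes the indicator function of the interval [0, t_k]. -/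
open Real Finset

/-- Concavity/Bernoulli: for `0 ≤ x ≤ y`, `0 < p ≤ 1`: `p y^(p-1)(y-x) ≤ y^p - x^p`. -/
lemma bern_aux {x y p : ℝ} (hx : 0 ≤ x) (hxy : x ≤ y) (hy : 0 < y)
    (hp0 : 0 < p) (hp1 : p ≤ 1) :
    p * y ^ (p - 1) * (y - x) ≤ y ^ p - x ^ p := by
  have hs : (-1 : ℝ) ≤ x / y - 1 := by
    have : 0 ≤ x / y := div_nonneg hx hy.le
    linarith
  have h := rpow_one_add_le_one_add_mul_self hs hp0.le hp1
  have h1 : (x / y) ^ p ≤ 1 + p * (x / y - 1) := by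
    have : (1 : ℝ) + (x / y - 1) = x / y := by ring
    rwa [this] at h
  have h2 : x ^ p / y ^ p ≤ 1 + p * (x / y - 1) := by
    rwa [Real.div_rpow hx hy.le] at h1
  have hyp : 0 < y ^ p := Real.rpow_pos_of_pos hy p
  have h3 : x ^ p ≤ (1 + p * (x / y - 1)) * y ^ p := (div_le_iff₀ hyp).mp h2
  have hA : y ^ p = y ^ (p - 1) * y := by
    rw [← Real.rpow_add_one hy.ne' (p - 1)]; ring_nf
  have h4 : (1 + p * (x / y - 1)) * y ^ p = y ^ p + p * y ^ (p - 1) * (x - y) := by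
    rw [hA]; field_simp
  rw [h4] at h3
  linarith

/-- Telescoping Riemann-sum bound for a decreasing power. -/
lemma tele_aux {p τ u : ℝ} (hp0 : 0 < p) (hp1 : p ≤ 1) (hτ : 0 < τ) (hu : 0 ≤ u) (N : ℕ) :
    ∑ j ∈ Finset.range N, τ * (u + ((j : ℝ) + 1) * τ) ^ (p - 1)
      ≤ (u + (N : ℝ) * τ) ^ p / p := by
  have key : ∀ j : ℕ, τ * (u + ((j : ℝ) + 1) * τ) ^ (p - 1)
      ≤ ((u + ((j : ℝ) + 1) * τ) ^ p - (u + (j : ℝ) * τ) ^ p) / p := by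
    intro j
    have hj : (0 : ℝ) ≤ (j : ℝ) := Nat.cast_nonneg j
    have hx : (0 : ℝ) ≤ u + (j : ℝ) * τ := by positivity
    have hy : (0 : ℝ) < u + ((j : ℝ) + 1) * τ := by nlinarith
    have hxy : u + (j : ℝ) * τ ≤ u + ((j : ℝ) + 1) * τ := by nlinarith
    have h := bern_aux hx hxy hy hp0 hp1
    rw [le_div_iff₀ hp0]
    have : u + ((j : ℝ) + 1) * τ - (u + (j : ℝ) * τ) = τ := by ring
    rw [this] at h
    nlinarith
  calc ∑ j ∈ Finset.range N, τ * (u + ((j : ℝ) + 1) * τ) ^ (p - 1)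
      ≤ ∑ j ∈ Finset.range N,
          ((u + ((j : ℝ) + 1) * τ) ^ p - (u + (j : ℝ) * τ) ^ p) / p :=
        Finset.sum_le_sum fun j _ => key j
    _ = ((u + (N : ℝ) * τ) ^ p - (u + (0 : ℝ) * τ) ^ p) / p := by
        rw [← Finset.sum_div]
        congr 1
        have := Finset.sum_range_sub (fun j : ℕ => (u + (j : ℝ) * τ) ^ p) N
        simp only [Nat.cast_add, Nat.cast_one, Nat.cast_zero] at this ⊢
        convert this using 2
    _ ≤ (u + (N : ℝ) * τ) ^ p / p := by
        have h0 : (0 : ℝ) ≤ (u + (0 : ℝ) * τ) ^ p := Real.rpow_nonneg (by linarith) p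
        have := sub_le_self ((u + (N : ℝ) * τ) ^ p) h0
        exact div_le_div_of_nonneg_right this hp0.le |>.trans_eq rfl

/-- If `x + y = S` with `x, y > 0` and both exponents nonpositive, then
`x^(a-1) y^(b-1)` is bounded by the "split at `S/2`" expression. -/
lemma split_aux {x y S a b : ℝ} (hx : 0 < x) (hy : 0 < y) (hS : x + y = S)
    (ha : a - 1 ≤ 0) (hb : b - 1 ≤ 0) :
    x ^ (a - 1) * y ^ (b - 1)
      ≤ (S / 2) ^ (a - 1) * y ^ (b - 1) + (S / 2) ^ (b - 1) * x ^ (a - 1) := by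
  have hS2 : 0 < S / 2 := by linarith
  rcases le_total (S / 2) x with h | h
  · have h1 : x ^ (a - 1) ≤ (S / 2) ^ (a - 1) := Real.rpow_le_rpow_of_nonpos hS2 h ha
    have h2 : (0 : ℝ) ≤ (S / 2) ^ (b - 1) * x ^ (a - 1) := by positivity
    nlinarith [Real.rpow_nonneg hy.le (b - 1)]
  · have hy2 : S / 2 ≤ y := by linarith
    have h1 : y ^ (b - 1) ≤ (S / 2) ^ (b - 1) := Real.rpow_le_rpow_of_nonpos hS2 hy2 hb
    have h2 : (0 : ℝ) ≤ (S / 2) ^ (a - 1) * y ^ (b - 1) := by positivity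
    nlinarith [Real.rpow_nonneg hx.le (a - 1)]

set_option maxHeartbeats 1000000 in
/-- Pointwise bound for the discrete weakly singular convolution kernel on the
uniform grid `t_k = k * τ`:
`τ * ∑_{k=1}^m t_{m-k+1}^(βα-1) (t_{k+1}-s)^((1-2β)α-1) χ_{[0,t_k]}(s)
  ≤ c (t_m - s)^((1-β)α-1)`. -/
theorem discrete_kernel_bound
    (α β : ℝ) (hα0 : 0 < α) (hα1 : α < 1) (hβ0 : 0 < β) (hβ : β < 1 / 2) :
    ∃ c : ℝ, 0 < c ∧
      ∀ (τ : ℝ), 0 < τ → ∀ (m : ℕ), 1 ≤ m →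
      ∀ s ∈ Set.Ico (0:ℝ) ((m : ℝ) * τ),
        τ * ∑ k ∈ Finset.Icc 1 m,
          (((m - k + 1 : ℕ) : ℝ) * τ) ^ (β * α - 1) *
            ((((k : ℝ) + 1) * τ - s) ^ ((1 - 2 * β) * α - 1)) *
            Set.indicator (Set.Icc (0:ℝ) ((k : ℝ) * τ)) (fun _ => (1:ℝ)) s
        ≤ c * ((m : ℝ) * τ - s) ^ ((1 - β) * α - 1) := by
  set a : ℝ := β * α with hadef
  set b : ℝ := (1 - 2 * β) * α with hbdef
  have ha : 0 < a := mul_pos hβ0 hα0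
  have hb : 0 < b := mul_pos (by linarith) hα0
  have ha1 : a ≤ 1 := by nlinarith
  have hb1 : b ≤ 1 := by nlinarith
  refine ⟨(2:ℝ) ^ (1 - a) / b + (2:ℝ) ^ (1 - b) / a, by positivity, ?_⟩
  intro τ hτ m hm s hs
  obtain ⟨hs0, hsm⟩ := hs
  set T : ℝ := (m : ℝ) * τ - s with hT
  have hT0 : 0 < T := sub_pos.mpr hsm
  set S : ℝ := T + 2 * τ with hSdef
  have hS0 : 0 < S := by dsimp [S]; linarith
  set k₀ : ℕ := max 1 ⌈s / τ⌉₊ with hk₀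
  have hk₀1 : 1 ≤ k₀ := le_max_left _ _
  have hk₀m : k₀ ≤ m := by
    refine max_le hm (Nat.ceil_le.mpr ?_)
    rw [div_le_iff₀ hτ]
    linarith
  have hsk₀ : s ≤ (k₀ : ℝ) * τ := by
    have h1 : s / τ ≤ (⌈s / τ⌉₊ : ℝ) := Nat.le_ceil _
    have h2 : ((⌈s / τ⌉₊ : ℕ) : ℝ) ≤ (k₀ : ℝ) := Nat.cast_le.mpr (le_max_right _ _)
    have h3 : s / τ ≤ (k₀ : ℝ) := h1.trans h2
    calc s = s / τ * τ := by field_simp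
      _ ≤ (k₀ : ℝ) * τ := by nlinarith
  set N : ℕ := m + 1 - k₀ with hN
  have hNc : (N : ℝ) = (m : ℝ) + 1 - (k₀ : ℝ) := by
    have : (m : ℕ) + 1 - k₀ + k₀ = m + 1 := by omega
    have := congrArg (fun n : ℕ => (n : ℝ)) this
    push_cast at this
    linarith
  -- reduce the indicator sum to a sum over `Icc k₀ m`
  have hsum1 : ∑ k ∈ Finset.Icc 1 m,
        (((m - k + 1 : ℕ) : ℝ) * τ) ^ (a - 1) *
          ((((k : ℝ) + 1) * τ - s) ^ (b - 1)) *
          Set.indicator (Set.Icc (0:ℝ) ((k : ℝ) * τ)) (fun _ => (1:ℝ)) s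
      = ∑ k ∈ Finset.Icc k₀ m,
        (((m - k + 1 : ℕ) : ℝ) * τ) ^ (a - 1) * ((((k : ℝ) + 1) * τ - s) ^ (b - 1)) := by
    rw [← Finset.sum_subset (Finset.Icc_subset_Icc_left hk₀1)]
    · apply Finset.sum_congr rfl
      intro k hk
      obtain ⟨hk1, hk2⟩ := Finset.mem_Icc.mp hk
      have hkk : (k₀ : ℝ) ≤ (k : ℝ) := Nat.cast_le.mpr hk1
      have hmem : s ∈ Set.Icc (0:ℝ) ((k : ℝ) * τ) := by
        constructor
        · exact hs0
        · refine hsk₀.trans ?_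
          nlinarith
      rw [Set.indicator_of_mem hmem]
      ring
    · intro k hk hk'
      obtain ⟨hk1, hk2⟩ := Finset.mem_Icc.mp hk
      have hkk : k < k₀ := by
        by_contra h
        exact hk' (Finset.mem_Icc.mpr ⟨not_lt.mp h, hk2⟩)
      have hceil : k < ⌈s / τ⌉₊ := by omega
      have hlt' : (k : ℝ) < s / τ := Nat.lt_ceil.mp hceil
      have hlt : (k : ℝ) * τ < s := by
        rw [lt_div_iff₀ hτ] at hlt'
        linarith
      have hnot : s ∉ Set.Icc (0:ℝ) ((k : ℝ) * τ) := by
        intro hmem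
        exact absurd hmem.2 (not_le.mpr hlt)
      rw [Set.indicator_of_notMem hnot, mul_zero]
  rw [hsum1, Finset.mul_sum]
  -- pointwise splitting bound
  have key : ∀ k ∈ Finset.Icc k₀ m,
      τ * ((((m - k + 1 : ℕ) : ℝ) * τ) ^ (a - 1) * ((((k : ℝ) + 1) * τ - s) ^ (b - 1)))
      ≤ (S / 2) ^ (a - 1) * (τ * ((((k : ℝ) + 1) * τ - s) ^ (b - 1)))
        + (S / 2) ^ (b - 1) * (τ * ((((m - k + 1 : ℕ) : ℝ) * τ) ^ (a - 1))) := by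
    intro k hk
    obtain ⟨hk1, hk2⟩ := Finset.mem_Icc.mp hk
    have hcast : ((m - k + 1 : ℕ) : ℝ) = (m : ℝ) - (k : ℝ) + 1 := by
      push_cast [Nat.cast_sub hk2]
      ring
    have hkk : (k₀ : ℝ) ≤ (k : ℝ) := Nat.cast_le.mpr hk1
    have hkm : (k : ℝ) ≤ (m : ℝ) := Nat.cast_le.mpr hk2
    have hx : (0 : ℝ) < ((m - k + 1 : ℕ) : ℝ) * τ := by
      rw [hcast]; nlinarith
    have hy : (0 : ℝ) < ((k : ℝ) + 1) * τ - s := by nlinarith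
    have hxy : ((m - k + 1 : ℕ) : ℝ) * τ + (((k : ℝ) + 1) * τ - s) = S := by
      rw [hcast]; dsimp [S, T]; ring
    have h := split_aux (a := a) (b := b) hx hy hxy (by linarith) (by linarith)
    have h2 := mul_le_mul_of_nonneg_left h hτ.le
    refine h2.trans_eq ?_
    ring
  -- the two telescoping sums
  have sumA : ∑ k ∈ Finset.Icc k₀ m, τ * ((((k : ℝ) + 1) * τ - s) ^ (b - 1)) ≤ S ^ b / b := by
    rw [← Finset.Ico_add_one_right_eq_Icc, Finset.sum_Ico_eq_sum_range]
    have hterm : ∀ i ∈ Finset.range (m + 1 - k₀),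
        τ * (((((k₀ + i : ℕ)) : ℝ) + 1) * τ - s) ^ (b - 1)
        = τ * (((k₀ : ℝ) * τ - s) + ((i : ℝ) + 1) * τ) ^ (b - 1) := by
      intro i _
      congr 2
      push_cast
      ring
    rw [Finset.sum_congr rfl hterm]
    have hu : (0 : ℝ) ≤ (k₀ : ℝ) * τ - s := by linarith
    refine (tele_aux hb hb1 hτ hu (m + 1 - k₀)).trans ?_
    have hbase : ((k₀ : ℝ) * τ - s) + ((m + 1 - k₀ : ℕ) : ℝ) * τ ≤ S := by
      rw [show ((m + 1 - k₀ : ℕ) : ℝ) = (N : ℝ) from rfl, hNc]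
      dsimp [S, T]
      nlinarith
    have := Real.rpow_le_rpow (by positivity) hbase hb.le
    exact div_le_div_of_nonneg_right this hb.le
  have sumB : ∑ k ∈ Finset.Icc k₀ m, τ * ((((m - k + 1 : ℕ) : ℝ) * τ) ^ (a - 1)) ≤ S ^ a / a := by
    rw [← Finset.Ico_add_one_right_eq_Icc, Finset.sum_Ico_eq_sum_range]
    have hterm : ∀ i ∈ Finset.range (m + 1 - k₀),
        τ * ((((m - (k₀ + i) + 1 : ℕ)) : ℝ) * τ) ^ (a - 1)
        = (fun j : ℕ => τ * ((0 : ℝ) + ((j : ℝ) + 1) * τ) ^ (a - 1)) (N - 1 - i) := by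
      intro i hi
      have hi' : i < N := Finset.mem_range.mp hi
      have hnat : m - (k₀ + i) + 1 = N - 1 - i + 1 := by omega
      simp only [hnat]
      congr 2
      push_cast
      ring
    rw [Finset.sum_congr rfl hterm]
    have hrefl := Finset.sum_range_reflect
      (fun j : ℕ => τ * ((0 : ℝ) + ((j : ℝ) + 1) * τ) ^ (a - 1)) N
    rw [show m + 1 - k₀ = N from rfl, hrefl]
    have hu : (0 : ℝ) ≤ (0 : ℝ) := le_refl 0
    refine (tele_aux ha ha1 hτ hu N).trans ?_
    have hbase : (0 : ℝ) + (N : ℝ) * τ ≤ S := by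
      rw [hNc]
      dsimp [S, T]
      nlinarith
    have := Real.rpow_le_rpow (by positivity) hbase ha.le
    exact div_le_div_of_nonneg_right this ha.le
  -- combine
  have hApos : (0 : ℝ) ≤ (S / 2) ^ (a - 1) := Real.rpow_nonneg (by linarith) _
  have hBpos : (0 : ℝ) ≤ (S / 2) ^ (b - 1) := Real.rpow_nonneg (by linarith) _
  have step : ∑ k ∈ Finset.Icc k₀ m,
        τ * ((((m - k + 1 : ℕ) : ℝ) * τ) ^ (a - 1) * ((((k : ℝ) + 1) * τ - s) ^ (b - 1)))
      ≤ (S / 2) ^ (a - 1) * (S ^ b / b) + (S / 2) ^ (b - 1) * (S ^ a / a) := by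
    calc ∑ k ∈ Finset.Icc k₀ m,
          τ * ((((m - k + 1 : ℕ) : ℝ) * τ) ^ (a - 1) * ((((k : ℝ) + 1) * τ - s) ^ (b - 1)))
        ≤ ∑ k ∈ Finset.Icc k₀ m,
          ((S / 2) ^ (a - 1) * (τ * ((((k : ℝ) + 1) * τ - s) ^ (b - 1)))
            + (S / 2) ^ (b - 1) * (τ * ((((m - k + 1 : ℕ) : ℝ) * τ) ^ (a - 1)))) :=
          Finset.sum_le_sum key
      _ = (S / 2) ^ (a - 1) * (∑ k ∈ Finset.Icc k₀ m, τ * ((((k : ℝ) + 1) * τ - s) ^ (b - 1)))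
            + (S / 2) ^ (b - 1) *
              (∑ k ∈ Finset.Icc k₀ m, τ * ((((m - k + 1 : ℕ) : ℝ) * τ) ^ (a - 1))) := by
          rw [Finset.sum_add_distrib]
          simp only [Finset.mul_sum]
      _ ≤ (S / 2) ^ (a - 1) * (S ^ b / b) + (S / 2) ^ (b - 1) * (S ^ a / a) := by
          have h1 := mul_le_mul_of_nonneg_left sumA hApos
          have h2 := mul_le_mul_of_nonneg_left sumB hBpos
          linarith
  refine step.trans ?_
  -- rpow algebra
  have h2a : (2 : ℝ) ^ (1 - a) = ((2 : ℝ) ^ (a - 1))⁻¹ := by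
    rw [show (1 - a) = -(a - 1) by ring, Real.rpow_neg (by norm_num : (0:ℝ) ≤ 2)]
  have h2b : (2 : ℝ) ^ (1 - b) = ((2 : ℝ) ^ (b - 1))⁻¹ := by
    rw [show (1 - b) = -(b - 1) by ring, Real.rpow_neg (by norm_num : (0:ℝ) ≤ 2)]
  have hSab : S ^ (a + b - 1) = S ^ (a - 1) * S ^ b := by
    rw [← Real.rpow_add hS0]; ring_nf
  have hSba : S ^ (a + b - 1) = S ^ (b - 1) * S ^ a := by
    rw [← Real.rpow_add hS0]; ring_nf
  have e1 : (S / 2) ^ (a - 1) * (S ^ b / b) = (2 : ℝ) ^ (1 - a) / b * S ^ (a + b - 1) := by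
    rw [Real.div_rpow hS0.le (by norm_num : (0:ℝ) ≤ 2), h2a, hSab]; ring
  have e2 : (S / 2) ^ (b - 1) * (S ^ a / a) = (2 : ℝ) ^ (1 - b) / a * S ^ (a + b - 1) := by
    rw [Real.div_rpow hS0.le (by norm_num : (0:ℝ) ≤ 2), h2b, hSba]; ring
  rw [e1, e2]
  have hexp : a + b - 1 = (1 - β) * α - 1 := by rw [hadef, hbdef]; ring
  have hexpneg : (1 - β) * α - 1 ≤ 0 := by nlinarith
  have hTS : T ≤ S := by dsimp [S]; linarith
  have hfin : S ^ ((1 - β) * α - 1) ≤ T ^ ((1 - β) * α - 1) :=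
    Real.rpow_le_rpow_of_nonpos hT0 hTS hexpneg
  rw [hexp]
  have hc : (0 : ℝ) ≤ (2 : ℝ) ^ (1 - a) / b + (2 : ℝ) ^ (1 - b) / a := by positivity
  calc (2 : ℝ) ^ (1 - a) / b * S ^ ((1 - β) * α - 1)
        + (2 : ℝ) ^ (1 - b) / a * S ^ ((1 - β) * α - 1)
      = ((2 : ℝ) ^ (1 - a) / b + (2 : ℝ) ^ (1 - b) / a) * S ^ ((1 - β) * α - 1) := by ring
    _ ≤ ((2 : ℝ) ^ (1 - a) / b + (2 : ℝ) ^ (1 - b) / a) * T ^ ((1 - β) * α - 1) :=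
        mul_le_mul_of_nonneg_left hfin hc
end

section
/- Let α ∈ (0,1) and β ∈ (0,1/2). There exists a constant c depending only on α and β such that for every τ > 0, every integer m ≥ 1 (with t_k = kτ), and every nonnegative measurable function h on [0, t_m], one has τ·∑_{k=1}^{m} t_{m-k+1}^{βα-1}·∫₀^{t_k} (t_{k+1} - s)^{(1-2β)α-1}·h(s) ds ≤ c·∫₀^{t_m} (t_m - s)^{(1-β)α-1}·h(s) ds. -/
open MeasureTheory

open MeasureTheory Set intervalIntegral
open scoped ENNReal

lemma lint_rpow_right {p q b : ℝ} (hb : -1 < b) (hpq : p ≤ q) :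
    ∫⁻ u in Set.Ioc p q, ENNReal.ofReal ((u - p) ^ b)
      = ENNReal.ofReal ((q - p) ^ (b + 1) / (b + 1)) := by
  have hii : IntervalIntegrable (fun u => (u - p) ^ b) volume p q := by
    simpa using (intervalIntegral.intervalIntegrable_rpow' (a := 0) (b := q - p) hb).comp_sub_right p
  have hint : IntegrableOn (fun u => (u - p) ^ b) (Set.Ioc p q) volume :=
    (intervalIntegrable_iff_integrableOn_Ioc_of_le hpq).1 hii
  have hnn : 0 ≤ᵐ[volume.restrict (Set.Ioc p q)] fun u => (u - p) ^ b :=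
    (ae_restrict_iff' measurableSet_Ioc).2 (Filter.Eventually.of_forall fun u hu =>
      Real.rpow_nonneg (by linarith [hu.1]) b)
  rw [← ofReal_integral_eq_lintegral_ofReal hint hnn]
  congr 1
  rw [← intervalIntegral.integral_of_le hpq]
  rw [intervalIntegral.integral_comp_sub_right (fun x => x ^ b) p]
  rw [sub_self, integral_rpow (Or.inl hb)]
  rw [Real.zero_rpow (by linarith)]
  ring_nf

lemma lint_rpow_left {p q a : ℝ} (ha : -1 < a) (hpq : p ≤ q) :
    ∫⁻ u in Set.Ioc p q, ENNReal.ofReal ((q - u) ^ a)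
      = ENNReal.ofReal ((q - p) ^ (a + 1) / (a + 1)) := by
  have hii : IntervalIntegrable (fun u => (q - u) ^ a) volume p q := by
    have := (intervalIntegral.intervalIntegrable_rpow' (a := 0) (b := q - p) ha).comp_sub_left q
    simpa using this.symm
  have hint : IntegrableOn (fun u => (q - u) ^ a) (Set.Ioc p q) volume :=
    (intervalIntegrable_iff_integrableOn_Ioc_of_le hpq).1 hii
  have hnn : 0 ≤ᵐ[volume.restrict (Set.Ioc p q)] fun u => (q - u) ^ a :=
    (ae_restrict_iff' measurableSet_Ioc).2 (Filter.Eventually.of_forall fun u hu =>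
      Real.rpow_nonneg (by linarith [hu.2]) a)
  rw [← ofReal_integral_eq_lintegral_ofReal hint hnn]
  congr 1
  rw [← intervalIntegral.integral_of_le hpq]
  rw [intervalIntegral.integral_comp_sub_left (fun x => x ^ a) q]
  rw [sub_self]
  rw [integral_rpow (Or.inl ha)]
  rw [Real.zero_rpow (by linarith)]
  ring_nf

lemma beta_bound {a b s T : ℝ} (ha0 : -1 < a) (ha1 : a < 0) (hb0 : -1 < b) (hb1 : b < 0)
    (hsT : s < T) :
    ∫⁻ u in Set.Ioc s T, ENNReal.ofReal ((T - u) ^ a) * ENNReal.ofReal ((u - s) ^ b)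
      ≤ ENNReal.ofReal ((1 / (a + 1) + 1 / (b + 1)) * ((T - s) / 2) ^ (a + b + 1)) := by
  have ha1' : 0 < a + 1 := by linarith
  have hb1' : 0 < b + 1 := by linarith
  set M : ℝ := (s + T) / 2 with hM
  have hsM : s < M := by simp only [hM]; linarith
  have hMT : M < T := by simp only [hM]; linarith
  have hMs : M - s = (T - s) / 2 := by simp only [hM]; ring
  have hTM : T - M = (T - s) / 2 := by simp only [hM]; ring
  have hL : (0:ℝ) < (T - s) / 2 := by linarith
  have hmeas_b : Measurable fun u : ℝ => ENNReal.ofReal ((u - s) ^ b) :=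
    ((measurable_id.sub_const s).pow measurable_const).ennreal_ofReal
  have hmeas_a : Measurable fun u : ℝ => ENNReal.ofReal ((T - u) ^ a) :=
    ((measurable_const.sub measurable_id).pow measurable_const).ennreal_ofReal
  rw [← Set.Ioc_union_Ioc_eq_Ioc hsM.le hMT.le,
    lintegral_union measurableSet_Ioc (Set.Ioc_disjoint_Ioc_of_le le_rfl)]
  have h1 : ∫⁻ u in Set.Ioc s M, ENNReal.ofReal ((T - u) ^ a) * ENNReal.ofReal ((u - s) ^ b)
      ≤ ENNReal.ofReal (((T - s) / 2) ^ a * (((T - s) / 2) ^ (b + 1) / (b + 1))) := by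
    calc ∫⁻ u in Set.Ioc s M, ENNReal.ofReal ((T - u) ^ a) * ENNReal.ofReal ((u - s) ^ b)
        ≤ ∫⁻ u in Set.Ioc s M,
            ENNReal.ofReal (((T - s) / 2) ^ a) * ENNReal.ofReal ((u - s) ^ b) := by
          refine setLIntegral_mono (measurable_const.mul hmeas_b) fun u hu => ?_
          refine mul_le_mul_left (ENNReal.ofReal_le_ofReal ?_) _
          refine Real.rpow_le_rpow_of_nonpos hL ?_ ha1.le
          have := hu.2; linarith
      _ = ENNReal.ofReal (((T - s) / 2) ^ a) *
            ∫⁻ u in Set.Ioc s M, ENNReal.ofReal ((u - s) ^ b) := lintegral_const_mul _ hmeas_b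
      _ = ENNReal.ofReal (((T - s) / 2) ^ a) * ENNReal.ofReal ((M - s) ^ (b + 1) / (b + 1)) := by
          rw [lint_rpow_right hb0 hsM.le]
      _ = _ := by
          rw [hMs, ← ENNReal.ofReal_mul (Real.rpow_nonneg hL.le _)]
  have h2 : ∫⁻ u in Set.Ioc M T, ENNReal.ofReal ((T - u) ^ a) * ENNReal.ofReal ((u - s) ^ b)
      ≤ ENNReal.ofReal (((T - s) / 2) ^ b * (((T - s) / 2) ^ (a + 1) / (a + 1))) := by
    calc ∫⁻ u in Set.Ioc M T, ENNReal.ofReal ((T - u) ^ a) * ENNReal.ofReal ((u - s) ^ b)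
        ≤ ∫⁻ u in Set.Ioc M T,
            ENNReal.ofReal (((T - s) / 2) ^ b) * ENNReal.ofReal ((T - u) ^ a) := by
          refine setLIntegral_mono (measurable_const.mul hmeas_a) fun u hu => ?_
          rw [mul_comm]
          refine mul_le_mul_left (ENNReal.ofReal_le_ofReal ?_) _
          refine Real.rpow_le_rpow_of_nonpos hL ?_ hb1.le
          have := hu.1; linarith
      _ = ENNReal.ofReal (((T - s) / 2) ^ b) *
            ∫⁻ u in Set.Ioc M T, ENNReal.ofReal ((T - u) ^ a) := lintegral_const_mul _ hmeas_a
      _ = ENNReal.ofReal (((T - s) / 2) ^ b) * ENNReal.ofReal ((T - M) ^ (a + 1) / (a + 1)) := by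
          rw [lint_rpow_left ha0 hMT.le]
      _ = _ := by
          rw [hTM, ← ENNReal.ofReal_mul (Real.rpow_nonneg hL.le _)]
  calc _ ≤ ENNReal.ofReal (((T - s) / 2) ^ a * (((T - s) / 2) ^ (b + 1) / (b + 1)))
        + ENNReal.ofReal (((T - s) / 2) ^ b * (((T - s) / 2) ^ (a + 1) / (a + 1))) :=
        add_le_add h1 h2
    _ = _ := by
        rw [← ENNReal.ofReal_add (by positivity) (by positivity)]
        congr 1
        rw [show a + b + 1 = a + (b + 1) by ring, Real.rpow_add hL a (b + 1),
          Real.rpow_add hL b 1, Real.rpow_add hL a 1, Real.rpow_one]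
        field_simp
        ring

lemma kernel_bound {a b τ : ℝ} (ha0 : -1 < a) (ha1 : a < 0) (hb0 : -1 < b) (hb1 : b < 0)
    (hab : a + b + 1 < 0) (hτ : 0 < τ) (m : ℕ) {s : ℝ} (hs0 : 0 < s)
    (hsm : s < (m : ℝ) * τ) :
    ∑ k ∈ Finset.Icc 1 m, ENNReal.ofReal τ *
        (ENNReal.ofReal ((((m - k + 1 : ℕ) : ℝ) * τ) ^ a) *
          (Set.Ioc (0:ℝ) ((k : ℝ) * τ)).indicator
            (fun x => ENNReal.ofReal ((((k : ℝ) + 1) * τ - x) ^ b)) s)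
      ≤ ENNReal.ofReal
          ((1 / (a + 1) + 1 / (b + 1)) * (2:ℝ) ^ (-(a + b + 1)) *
            ((m : ℝ) * τ - s) ^ (a + b + 1)) := by
  have ha1' : 0 < a + 1 := by linarith
  have hb1' : 0 < b + 1 := by linarith
  set T : ℝ := ((m : ℝ) + 1) * τ with hT
  set G : ℝ → ℝ≥0∞ := fun u =>
    ENNReal.ofReal ((T - u) ^ a) * ENNReal.ofReal ((u - s) ^ b) with hG
  have hGmeas : Measurable G :=
    (((measurable_const.sub measurable_id).pow measurable_const).ennreal_ofReal).mul
      (((measurable_id.sub_const s).pow measurable_const).ennreal_ofReal)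
  set S : ℕ → Set ℝ := fun k =>
    Set.Ioc ((k : ℝ) * τ) (((k : ℝ) + 1) * τ) ∩ Set.Ioi s with hS
  have hSmeas : ∀ k, MeasurableSet (S k) := fun k => measurableSet_Ioc.inter measurableSet_Ioi
  -- Step A: per-term bound
  have stepA : ∀ k ∈ Finset.Icc 1 m,
      ENNReal.ofReal τ *
        (ENNReal.ofReal ((((m - k + 1 : ℕ) : ℝ) * τ) ^ a) *
          (Set.Ioc (0:ℝ) ((k : ℝ) * τ)).indicator
            (fun x => ENNReal.ofReal ((((k : ℝ) + 1) * τ - x) ^ b)) s)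
        ≤ ∫⁻ u in S k, G u := by
    intro k hk
    obtain ⟨hk1, hkm⟩ := Finset.mem_Icc.1 hk
    by_cases hsk : s ≤ (k : ℝ) * τ
    · rw [Set.indicator_of_mem (Set.mem_Ioc.mpr ⟨hs0, hsk⟩)]
      have hcast : ((m - k + 1 : ℕ) : ℝ) = (m : ℝ) - (k : ℝ) + 1 := by
        rw [Nat.cast_add, Nat.cast_sub hkm, Nat.cast_one]
      have hkm' : (k : ℝ) ≤ (m : ℝ) := by exact_mod_cast hkm
      have hsub : Set.Ioo ((k : ℝ) * τ) (((k : ℝ) + 1) * τ) ⊆ S k := by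
        intro u hu
        obtain ⟨hu1, hu2⟩ := Set.mem_Ioo.mp hu
        exact Set.mem_inter (Set.mem_Ioc.mpr ⟨hu1, hu2.le⟩)
          (Set.mem_Ioi.mpr (lt_of_le_of_lt hsk hu1))
      refine le_trans ?_ (lintegral_mono_set hsub)
      have hvol : volume (Set.Ioo ((k : ℝ) * τ) (((k : ℝ) + 1) * τ)) = ENNReal.ofReal τ := by
        rw [Real.volume_Ioo]; congr 1; ring
      have hA : (0:ℝ) ≤ (((m - k + 1 : ℕ) : ℝ) * τ) ^ a := by positivity
      calc ENNReal.ofReal τ *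
            (ENNReal.ofReal ((((m - k + 1 : ℕ) : ℝ) * τ) ^ a) *
              ENNReal.ofReal ((((k : ℝ) + 1) * τ - s) ^ b))
          = (ENNReal.ofReal ((((m - k + 1 : ℕ) : ℝ) * τ) ^ a) *
              ENNReal.ofReal ((((k : ℝ) + 1) * τ - s) ^ b)) *
              volume (Set.Ioo ((k : ℝ) * τ) (((k : ℝ) + 1) * τ)) := by
            rw [hvol]; ring
        _ = ∫⁻ _ in Set.Ioo ((k : ℝ) * τ) (((k : ℝ) + 1) * τ),
              (ENNReal.ofReal ((((m - k + 1 : ℕ) : ℝ) * τ) ^ a) *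
                ENNReal.ofReal ((((k : ℝ) + 1) * τ - s) ^ b)) := by
            rw [setLIntegral_const]
        _ ≤ ∫⁻ u in Set.Ioo ((k : ℝ) * τ) (((k : ℝ) + 1) * τ), G u := by
            refine setLIntegral_mono' measurableSet_Ioo fun u hu => ?_
            obtain ⟨hu1, hu2⟩ := hu
            refine mul_le_mul' (ENNReal.ofReal_le_ofReal ?_) (ENNReal.ofReal_le_ofReal ?_)
            · refine Real.rpow_le_rpow_of_nonpos ?_ ?_ ha1.le
              · simp only [hT]; nlinarith
              · rw [hcast]; simp only [hT]; nlinarith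
            · refine Real.rpow_le_rpow_of_nonpos ?_ ?_ hb1.le
              · have : s < u := lt_of_le_of_lt hsk hu1
                linarith
              · linarith
    · rw [Set.indicator_of_notMem (fun hmem => hsk hmem.2), mul_zero, mul_zero]
      exact zero_le
  -- Step B: the disjoint pieces fit inside `Ioc s T`
  have stepB : ∑ k ∈ Finset.Icc 1 m, ∫⁻ u in S k, G u ≤ ∫⁻ u in Set.Ioc s T, G u := by
    have hrw : ∀ k ∈ Finset.Icc 1 m,
        ∫⁻ u in S k, G u = ∫⁻ u, (S k).indicator G u := by
      intro k _; rw [lintegral_indicator (hSmeas k)]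
    rw [Finset.sum_congr rfl hrw,
      ← lintegral_finset_sum _ (fun k _ => hGmeas.indicator (hSmeas k)),
      ← lintegral_indicator measurableSet_Ioc]
    refine lintegral_mono fun u => ?_
    by_cases hex : ∃ k ∈ Finset.Icc 1 m, u ∈ S k
    · obtain ⟨k₀, hk₀m, hk₀u⟩ := hex
      have hmono : ∀ k ∈ Finset.Icc 1 m, k ≠ k₀ → (S k).indicator G u = 0 := by
        intro k hk hne
        refine Set.indicator_of_notMem (fun hu => ?_) _
        rcases lt_or_gt_of_ne hne with hlt | hgt
        · have h1 : ((k : ℝ) + 1) ≤ (k₀ : ℝ) := by exact_mod_cast hlt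
          have h2 := hu.1.2
          have h3 := hk₀u.1.1
          nlinarith
        · have h1 : ((k₀ : ℝ) + 1) ≤ (k : ℝ) := by exact_mod_cast hgt
          have h2 := hk₀u.1.2
          have h3 := hu.1.1
          nlinarith
      rw [Finset.sum_eq_single_of_mem k₀ hk₀m hmono, Set.indicator_of_mem hk₀u]
      have hk₀le : (k₀ : ℝ) + 1 ≤ (m : ℝ) + 1 := by
        have := (Finset.mem_Icc.1 hk₀m).2; exact_mod_cast Nat.succ_le_succ this
      have humem : u ∈ Set.Ioc s T := by
        have hu2 : s < u := Set.mem_Ioi.mp hk₀u.2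
        have hu1 := (Set.mem_Ioc.mp hk₀u.1).2
        refine Set.mem_Ioc.mpr ⟨hu2, le_trans hu1 ?_⟩
        simp only [hT]; nlinarith
      rw [Set.indicator_of_mem humem]
    · rw [Finset.sum_eq_zero
        (fun k hk => Set.indicator_of_notMem (fun hu => hex ⟨k, hk, hu⟩) _)]
      exact zero_le
  -- Step C: beta bound and arithmetic
  have hsT : s < T := by simp only [hT]; nlinarith
  calc ∑ k ∈ Finset.Icc 1 m, ENNReal.ofReal τ *
        (ENNReal.ofReal ((((m - k + 1 : ℕ) : ℝ) * τ) ^ a) *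
          (Set.Ioc (0:ℝ) ((k : ℝ) * τ)).indicator
            (fun x => ENNReal.ofReal ((((k : ℝ) + 1) * τ - x) ^ b)) s)
      ≤ ∑ k ∈ Finset.Icc 1 m, ∫⁻ u in S k, G u := Finset.sum_le_sum stepA
    _ ≤ ∫⁻ u in Set.Ioc s T, G u := stepB
    _ ≤ ENNReal.ofReal ((1 / (a + 1) + 1 / (b + 1)) * ((T - s) / 2) ^ (a + b + 1)) :=
        beta_bound ha0 ha1 hb0 hb1 hsT
    _ ≤ _ := by
        refine ENNReal.ofReal_le_ofReal ?_
        have hC : (0:ℝ) ≤ 1 / (a + 1) + 1 / (b + 1) := by positivity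
        rw [mul_assoc]
        refine mul_le_mul_of_nonneg_left ?_ hC
        have hms : (0:ℝ) < (m : ℝ) * τ - s := by linarith
        have h1 : ((T - s) / 2) ^ (a + b + 1) ≤ (((m : ℝ) * τ - s) / 2) ^ (a + b + 1) := by
          refine Real.rpow_le_rpow_of_nonpos (by linarith) ?_ hab.le
          have : (m : ℝ) * τ ≤ T := by simp only [hT]; nlinarith
          linarith
        refine h1.trans ?_
        rw [Real.div_rpow hms.le (by norm_num : (0:ℝ) ≤ 2),
          Real.rpow_neg (by norm_num : (0:ℝ) ≤ 2), div_eq_mul_inv, mul_comm]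


/-- Summed weakly singular convolution estimate for a nonnegative measurable
function `h` on the uniform grid `t_k = k * τ` (integrals taken in the extended
nonnegative reals). -/
theorem discrete_kernel_integral_bound
    (α β : ℝ) (hα0 : 0 < α) (hα1 : α < 1) (hβ0 : 0 < β) (hβ : β < 1 / 2) :
    ∃ c : ℝ, 0 < c ∧
      ∀ (τ : ℝ), 0 < τ → ∀ (m : ℕ), 1 ≤ m →
      ∀ h : ℝ → ENNReal, Measurable h →
        ENNReal.ofReal τ * ∑ k ∈ Finset.Icc 1 m,
          ENNReal.ofReal ((((m - k + 1 : ℕ) : ℝ) * τ) ^ (β * α - 1)) *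
            ∫⁻ s in Set.Ioc (0:ℝ) ((k : ℝ) * τ),
              ENNReal.ofReal ((((k : ℝ) + 1) * τ - s) ^ ((1 - 2 * β) * α - 1)) * h s
        ≤ ENNReal.ofReal c *
            ∫⁻ s in Set.Ioc (0:ℝ) ((m : ℝ) * τ),
              ENNReal.ofReal (((m : ℝ) * τ - s) ^ ((1 - β) * α - 1)) * h s := by
  set a : ℝ := β * α - 1 with ha_def
  set b : ℝ := (1 - 2 * β) * α - 1 with hb_def
  have ha0 : -1 < a := by simp only [ha_def]; nlinarith
  have ha1 : a < 0 := by simp only [ha_def]; nlinarith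
  have hb0 : -1 < b := by simp only [hb_def]; nlinarith
  have hb1 : b < 0 := by simp only [hb_def]; nlinarith
  have hab : a + b + 1 < 0 := by simp only [ha_def, hb_def]; nlinarith
  have ha1' : 0 < a + 1 := by linarith
  have hb1' : 0 < b + 1 := by linarith
  refine ⟨(1 / (a + 1) + 1 / (b + 1)) * (2:ℝ) ^ (-(a + b + 1)), by positivity, ?_⟩
  intro τ hτ m hm h hmeas
  have hγ : (1 - β) * α - 1 = a + b + 1 := by simp only [ha_def, hb_def]; ring
  set D : Set ℝ := Set.Ioc (0:ℝ) ((m : ℝ) * τ) with hD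
  set g : ℕ → ℝ → ℝ≥0∞ := fun k x => ENNReal.ofReal ((((k : ℝ) + 1) * τ - x) ^ b) with hg
  have hgmeas : ∀ k, Measurable (g k) := fun k =>
    ((measurable_const.sub measurable_id).pow measurable_const).ennreal_ofReal
  set ind : ℕ → ℝ → ℝ≥0∞ := fun k => (Set.Ioc (0:ℝ) ((k : ℝ) * τ)).indicator (g k) with hind
  have hindmeas : ∀ k, Measurable (ind k) := fun k => (hgmeas k).indicator measurableSet_Ioc
  have hm0 : (0:ℝ) < (m : ℝ) * τ := by
    have : (1:ℝ) ≤ (m:ℝ) := by exact_mod_cast hm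
    nlinarith
  -- rewrite inner integrals over the common domain D
  have hk_inner : ∀ k ∈ Finset.Icc 1 m,
      ∫⁻ s in Set.Ioc (0:ℝ) ((k : ℝ) * τ), g k s * h s
        = ∫⁻ s in D, ind k s * h s := by
    intro k hk
    have hkm : (k : ℝ) * τ ≤ (m : ℝ) * τ := by
      have : (k:ℝ) ≤ (m:ℝ) := by exact_mod_cast (Finset.mem_Icc.1 hk).2
      nlinarith
    have hsub : Set.Ioc (0:ℝ) ((k : ℝ) * τ) ⊆ D := Set.Ioc_subset_Ioc_right hkm
    have step1 : ∫⁻ s in Set.Ioc (0:ℝ) ((k : ℝ) * τ), g k s * h s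
        = ∫⁻ s in D, (Set.Ioc (0:ℝ) ((k : ℝ) * τ)).indicator (fun x => g k x * h x) s := by
      rw [lintegral_indicator measurableSet_Ioc, Measure.restrict_restrict measurableSet_Ioc,
        Set.inter_eq_self_of_subset_left hsub]
    rw [step1]
    refine lintegral_congr fun s => ?_
    by_cases hs : s ∈ Set.Ioc (0:ℝ) ((k : ℝ) * τ)
    · rw [Set.indicator_of_mem hs]
      simp only [hind, Set.indicator_of_mem hs]
    · rw [Set.indicator_of_notMem hs]
      simp only [hind, Set.indicator_of_notMem hs, zero_mul]
  -- main chain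
  calc ENNReal.ofReal τ * ∑ k ∈ Finset.Icc 1 m,
        ENNReal.ofReal ((((m - k + 1 : ℕ) : ℝ) * τ) ^ a) *
          ∫⁻ s in Set.Ioc (0:ℝ) ((k : ℝ) * τ), g k s * h s
      = ENNReal.ofReal τ * ∑ k ∈ Finset.Icc 1 m,
          ∫⁻ s in D, ENNReal.ofReal ((((m - k + 1 : ℕ) : ℝ) * τ) ^ a) * (ind k s * h s) := by
        congr 1
        refine Finset.sum_congr rfl fun k hk => ?_
        rw [hk_inner k hk, lintegral_const_mul _ (f := fun s => ind k s * h s) ((hindmeas k).mul hmeas)]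
    _ = ∫⁻ s in D, ENNReal.ofReal τ * ∑ k ∈ Finset.Icc 1 m,
          ENNReal.ofReal ((((m - k + 1 : ℕ) : ℝ) * τ) ^ a) * (ind k s * h s) := by
        rw [← lintegral_finset_sum _
          (f := fun k s => ENNReal.ofReal ((((m - k + 1 : ℕ) : ℝ) * τ) ^ a) * (ind k s * h s))
          (fun k _ => measurable_const.mul ((hindmeas k).mul hmeas)),
          ← lintegral_const_mul _
            (f := fun s => ∑ k ∈ Finset.Icc 1 m, ENNReal.ofReal ((((m - k + 1 : ℕ) : ℝ) * τ) ^ a) * (ind k s * h s))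
            (Finset.measurable_sum _
            (fun k _ => measurable_const.mul ((hindmeas k).mul hmeas)))]
    _ = ∫⁻ s in D, (∑ k ∈ Finset.Icc 1 m,
          ENNReal.ofReal τ * (ENNReal.ofReal ((((m - k + 1 : ℕ) : ℝ) * τ) ^ a) * ind k s)) * h s := by
        refine lintegral_congr fun s => ?_
        rw [Finset.sum_mul, Finset.mul_sum]
        refine Finset.sum_congr rfl fun k _ => ?_
        ring
    _ ≤ ∫⁻ s in D, ENNReal.ofReal
          ((1 / (a + 1) + 1 / (b + 1)) * (2:ℝ) ^ (-(a + b + 1)) *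
            ((m : ℝ) * τ - s) ^ (a + b + 1)) * h s := by
        refine setLIntegral_mono_ae' measurableSet_Ioc ?_
        have hae : ∀ᵐ (x:ℝ), x ≠ (m : ℝ) * τ := by
          refine ae_iff.mpr ?_
          simp only [ne_eq, not_not, Set.setOf_eq_eq_singleton, Real.volume_singleton]
        filter_upwards [hae] with s hs hsD
        have hslt : s < (m : ℝ) * τ := lt_of_le_of_ne hsD.2 hs
        exact mul_le_mul_left
          (kernel_bound ha0 ha1 hb0 hb1 hab hτ m hsD.1 hslt) (h s)
    _ = ∫⁻ s in D, ENNReal.ofReal ((1 / (a + 1) + 1 / (b + 1)) * (2:ℝ) ^ (-(a + b + 1))) *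
          (ENNReal.ofReal (((m : ℝ) * τ - s) ^ (a + b + 1)) * h s) := by
        refine lintegral_congr fun s => ?_
        rw [ENNReal.ofReal_mul (by positivity), mul_assoc]
    _ = ENNReal.ofReal ((1 / (a + 1) + 1 / (b + 1)) * (2:ℝ) ^ (-(a + b + 1))) *
          ∫⁻ s in D, ENNReal.ofReal (((m : ℝ) * τ - s) ^ (a + b + 1)) * h s :=
        lintegral_const_mul _
          ((((measurable_const.sub measurable_id').pow measurable_const).ennreal_ofReal).mul hmeas)
    _ = _ := by rw [hγ]
end

section
/- Let V be a real Banach space, t* > 0, and let k ≥ 1 and 0 ≤ m < k be integers, and γ ∈ (0,1]. There exists a constant c depending only on k and γ such that for every k-times continuously differentiable function f : [0,t*] → V, one has ∫₀^{t*} (t*-s)^{γ-1}·‖f^{(m)}(s)‖ ds ≤ c·∑_{j=0}^{k-m-1} t*^{γ+j}·‖f^{(m+j)}(0)‖ + c·t*^{k-m}·∫₀^{t*} (t*-s)^{γ-1}·‖f^{(k)}(s)‖ ds. -/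
open MeasureTheory Set intervalIntegral

lemma weight_intble (T γ : ℝ) (hγ : 0 < γ) :
    IntervalIntegrable (fun s => (T - s) ^ (γ - 1)) volume 0 T := by
  have h := (intervalIntegral.intervalIntegrable_rpow' (a := 0) (b := T) (r := γ - 1)
    (by linarith)).comp_sub_left T
  simpa using h.symm

lemma weight_integral (T γ : ℝ) (hT : 0 ≤ T) (hγ : 0 < γ) :
    (∫ s in (0:ℝ)..T, (T - s) ^ (γ - 1)) = T ^ γ / γ := by
  have h := intervalIntegral.integral_comp_sub_left (a := (0:ℝ)) (b := T)
    (fun x => x ^ (γ - 1)) T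
  simp only [sub_zero, sub_self] at h
  rw [h, integral_rpow (Or.inl (by linarith)), sub_add_cancel,
    Real.zero_rpow hγ.ne', sub_zero]

lemma step_bound {V : Type} [NormedAddCommGroup V] [NormedSpace ℝ V] [CompleteSpace V]
    (T γ : ℝ) (hT : 0 < T) (hγ0 : 0 < γ) (hγ1 : γ ≤ 1) (g g' : ℝ → V)
    (hgc : ContinuousOn g (Icc 0 T)) (hg'c : ContinuousOn g' (Icc 0 T))
    (hderiv : ∀ x ∈ Icc (0:ℝ) T, HasDerivWithinAt g (g' x) (Icc 0 T) x) :
    (∫ s in (0:ℝ)..T, (T - s) ^ (γ - 1) * ‖g s‖)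
      ≤ (1/γ) * T ^ γ * ‖g 0‖ + (T/γ) * ∫ s in (0:ℝ)..T, (T - s) ^ (γ - 1) * ‖g' s‖ := by
  have huIcc : uIcc (0:ℝ) T = Icc 0 T := uIcc_of_le hT.le
  have hw : IntervalIntegrable (fun s => (T - s) ^ (γ - 1)) volume 0 T :=
    weight_intble T γ hγ0
  have hwg : IntervalIntegrable (fun s => (T - s) ^ (γ - 1) * ‖g s‖) volume 0 T :=
    hw.mul_continuousOn (by rw [huIcc]; exact hgc.norm)
  have hwg' : IntervalIntegrable (fun s => (T - s) ^ (γ - 1) * ‖g' s‖) volume 0 T :=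
    hw.mul_continuousOn (by rw [huIcc]; exact hg'c.norm)
  have hg'int : IntervalIntegrable g' volume 0 T := by
    rw [intervalIntegrable_iff_integrableOn_Icc_of_le hT.le]
    exact hg'c.integrableOn_compact isCompact_Icc
  set A := ∫ s in (0:ℝ)..T, ‖g' s‖ with hA
  set B := ∫ s in (0:ℝ)..T, (T - s) ^ (γ - 1) * ‖g' s‖ with hB
  have hAnonneg : 0 ≤ A := intervalIntegral.integral_nonneg hT.le (fun s _ => norm_nonneg _)
  have hBnonneg : 0 ≤ B := intervalIntegral.integral_nonneg hT.le
    (fun s hs => mul_nonneg (Real.rpow_nonneg (by linarith [hs.2]) _) (norm_nonneg _))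
  -- pointwise bound ‖g s‖ ≤ ‖g 0‖ + A
  have hptg : ∀ s ∈ Icc (0:ℝ) T, ‖g s‖ ≤ ‖g 0‖ + A := by
    intro s hs
    have hftc : (∫ ξ in (0:ℝ)..s, g' ξ) = g s - g 0 := by
      apply intervalIntegral.integral_eq_sub_of_hasDeriv_right_of_le hs.1
        (hgc.mono (Icc_subset_Icc le_rfl hs.2))
      · intro x hx
        have hxm : x ∈ Icc (0:ℝ) T := ⟨hx.1.le, hx.2.le.trans hs.2⟩
        exact (hderiv x hxm).mono_of_mem_nhdsWithin
          (Icc_mem_nhdsGT_of_mem ⟨hx.1.le, lt_of_lt_of_le hx.2 hs.2⟩)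
      · exact hg'int.mono_set (by rw [huIcc, uIcc_of_le hs.1]; exact Icc_subset_Icc le_rfl hs.2)
    have h1 : ‖g s‖ ≤ ‖g 0‖ + ‖∫ ξ in (0:ℝ)..s, g' ξ‖ := by
      calc ‖g s‖ = ‖g 0 + (g s - g 0)‖ := by congr 1; abel
        _ ≤ ‖g 0‖ + ‖g s - g 0‖ := norm_add_le _ _
        _ = ‖g 0‖ + ‖∫ ξ in (0:ℝ)..s, g' ξ‖ := by rw [hftc]
    refine h1.trans (add_le_add_right ?_ _)
    calc ‖∫ ξ in (0:ℝ)..s, g' ξ‖ ≤ ∫ ξ in (0:ℝ)..s, ‖g' ξ‖ :=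
          intervalIntegral.norm_integral_le_integral_norm hs.1
      _ ≤ A := by
          apply intervalIntegral.integral_mono_interval le_rfl hs.1 hs.2
            (Filter.Eventually.of_forall (fun x => norm_nonneg _))
          exact hg'int.norm
  -- step 1: ∫ w ‖g‖ ≤ (∫ w) * (‖g 0‖ + A)
  have h2 : (∫ s in (0:ℝ)..T, (T - s) ^ (γ - 1) * ‖g s‖)
      ≤ (T ^ γ / γ) * (‖g 0‖ + A) := by
    have := intervalIntegral.integral_mono_on hT.le hwg (hw.mul_const (‖g 0‖ + A))
      (fun x hx => by
        have : (0:ℝ) ≤ (T - x) ^ (γ - 1) := Real.rpow_nonneg (by linarith [hx.2]) _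
        exact mul_le_mul_of_nonneg_left (hptg x hx) this)
    rwa [intervalIntegral.integral_mul_const, weight_integral T γ hT.le hγ0] at this
  -- step 2: A ≤ T^(1-γ) * B
  have h3 : A ≤ T ^ (1 - γ) * B := by
    have hmono : (fun s => ‖g' s‖) ≤ᵐ[volume.restrict (Icc (0:ℝ) T)]
        (fun s => T ^ (1 - γ) * ((T - s) ^ (γ - 1) * ‖g' s‖)) := by
      have hmem : ∀ᵐ s ∂(volume.restrict (Icc (0:ℝ) T)), s ∈ Icc (0:ℝ) T :=
        ae_restrict_mem measurableSet_Icc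
      have hne : ∀ᵐ s ∂(volume.restrict (Icc (0:ℝ) T)), s ≠ T := by
        apply ae_restrict_of_ae
        simp only [ae_iff, not_not, setOf_eq_eq_singleton]
        exact Real.volume_singleton
      filter_upwards [hmem, hne] with s hs hsne
      have hTs : 0 < T - s := lt_of_le_of_ne (by linarith [hs.2]) (by intro h; exact hsne (by linarith))
      have key : (1:ℝ) ≤ T ^ (1 - γ) * (T - s) ^ (γ - 1) := by
        have h4 : (T - s) ^ (1 - γ) ≤ T ^ (1 - γ) :=
          Real.rpow_le_rpow hTs.le (by linarith [hs.1]) (by linarith)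
        have h5 : (T - s) ^ (1 - γ) * (T - s) ^ (γ - 1) = 1 := by
          have he : (1 - γ) + (γ - 1) = 0 := by ring
          rw [← Real.rpow_add hTs, he, Real.rpow_zero]
        calc (1:ℝ) = (T - s) ^ (1 - γ) * (T - s) ^ (γ - 1) := h5.symm
          _ ≤ T ^ (1 - γ) * (T - s) ^ (γ - 1) :=
            mul_le_mul_of_nonneg_right h4 (Real.rpow_nonneg hTs.le _)
      calc ‖g' s‖ = 1 * ‖g' s‖ := (one_mul _).symm
        _ ≤ (T ^ (1 - γ) * (T - s) ^ (γ - 1)) * ‖g' s‖ :=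
            mul_le_mul_of_nonneg_right key (norm_nonneg _)
        _ = T ^ (1 - γ) * ((T - s) ^ (γ - 1) * ‖g' s‖) := by ring
    have := intervalIntegral.integral_mono_ae_restrict hT.le hg'int.norm
      (hwg'.const_mul _) hmono
    rwa [intervalIntegral.integral_const_mul] at this
  -- combine
  have hTγpos : (0:ℝ) < T ^ γ / γ := by positivity
  have hkey : (T ^ γ / γ) * (T ^ (1 - γ)) = T / γ := by
    have he : γ + (1 - γ) = 1 := by ring
    rw [div_mul_eq_mul_div, ← Real.rpow_add hT, he, Real.rpow_one]
  calc (∫ s in (0:ℝ)..T, (T - s) ^ (γ - 1) * ‖g s‖)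
      ≤ (T ^ γ / γ) * (‖g 0‖ + A) := h2
    _ ≤ (T ^ γ / γ) * (‖g 0‖ + T ^ (1 - γ) * B) := by
        apply mul_le_mul_of_nonneg_left _ hTγpos.le
        exact add_le_add_right h3 _
    _ = (1/γ) * T ^ γ * ‖g 0‖ + ((T ^ γ / γ) * (T ^ (1 - γ))) * B := by ring
    _ = (1/γ) * T ^ γ * ‖g 0‖ + (T/γ) * B := by rw [hkey]

lemma main_aux {V : Type} [NormedAddCommGroup V] [NormedSpace ℝ V] [CompleteSpace V]
    (k : ℕ) (γ : ℝ) (hγ0 : 0 < γ) (hγ1 : γ ≤ 1) (T : ℝ) (hT : 0 < T)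
    (f : ℝ → V) (hf : ContDiffOn ℝ (k : ℕ) f (Icc 0 T)) :
    ∀ n m : ℕ, m + n = k →
    (∫ s in (0:ℝ)..T, (T - s) ^ (γ - 1) * ‖iteratedDerivWithin m f (Icc 0 T) s‖)
      ≤ (1/γ)^n * ((∑ j ∈ Finset.range n,
            T ^ (γ + (j : ℝ)) * ‖iteratedDerivWithin (m + j) f (Icc 0 T) 0‖)
          + T ^ n * ∫ s in (0:ℝ)..T,
              (T - s) ^ (γ - 1) * ‖iteratedDerivWithin k f (Icc 0 T) s‖) := by
  have hu : UniqueDiffOn ℝ (Icc (0:ℝ) T) := uniqueDiffOn_Icc hT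
  intro n
  induction n with
  | zero =>
    intro m hm
    simp only [Nat.add_zero] at hm
    subst hm
    simp
  | succ n ih =>
    intro m hm
    have hmk : m < k := by omega
    have hm1 : (m + 1) + n = k := by omega
    set g := iteratedDerivWithin m f (Icc 0 T) with hg
    set g' := iteratedDerivWithin (m + 1) f (Icc 0 T) with hg'
    have hgc : ContinuousOn g (Icc 0 T) :=
      hf.continuousOn_iteratedDerivWithin (by exact_mod_cast hmk.le) hu
    have hg'c : ContinuousOn g' (Icc 0 T) :=
      hf.continuousOn_iteratedDerivWithin (by exact_mod_cast hmk) hu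
    have hderiv : ∀ x ∈ Icc (0:ℝ) T, HasDerivWithinAt g (g' x) (Icc 0 T) x := by
      intro x hx
      have hd := (hf.differentiableOn_iteratedDerivWithin
        (show (m : WithTop ℕ∞) < k by exact_mod_cast hmk) hu) x hx
      have := hd.hasDerivWithinAt
      rwa [hg', iteratedDerivWithin_succ]
    have hstep := step_bound T γ hT hγ0 hγ1 g g' hgc hg'c hderiv
    have hIH := ih (m + 1) hm1
    set B := ∫ s in (0:ℝ)..T, (T - s) ^ (γ - 1) * ‖iteratedDerivWithin k f (Icc 0 T) s‖ with hBdef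
    have hBnonneg : 0 ≤ B := intervalIntegral.integral_nonneg hT.le
      (fun s hs => mul_nonneg (Real.rpow_nonneg (by linarith [hs.2]) _) (norm_nonneg _))
    set S' := ∑ j ∈ Finset.range n,
        T ^ (γ + (j : ℝ)) * ‖iteratedDerivWithin (m + 1 + j) f (Icc 0 T) 0‖ with hS'
    have hS'nonneg : 0 ≤ S' := Finset.sum_nonneg
      (fun j _ => mul_nonneg (Real.rpow_nonneg hT.le _) (norm_nonneg _))
    -- rewrite target sum
    have hsum : (∑ j ∈ Finset.range (n + 1),
        T ^ (γ + (j : ℝ)) * ‖iteratedDerivWithin (m + j) f (Icc 0 T) 0‖)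
        = T ^ γ * ‖g 0‖ + T * S' := by
      rw [Finset.sum_range_succ']
      simp only [Nat.cast_zero, add_zero, Nat.add_zero]
      rw [add_comm]
      congr 1
      rw [Finset.mul_sum]
      apply Finset.sum_congr rfl
      intro j _
      have : T ^ (γ + ((j : ℝ) + 1)) = T * T ^ (γ + (j : ℝ)) := by
        rw [show γ + ((j : ℝ) + 1) = 1 + (γ + (j : ℝ)) by ring, Real.rpow_add hT,
          Real.rpow_one]
      push_cast
      rw [this, show m + (j + 1) = m + 1 + j by omega]
      ring
    have hγinv : (1:ℝ) ≤ 1/γ := by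
      rw [le_div_iff₀ hγ0]; linarith
    have hγinvpos : (0:ℝ) < 1/γ := by positivity
    have hpow : (1:ℝ)/γ ≤ (1/γ)^(n+1) := le_self_pow₀ hγinv (by omega)
    have hpown : (0:ℝ) < (1/γ)^n := pow_pos hγinvpos n
    calc (∫ s in (0:ℝ)..T, (T - s) ^ (γ - 1) * ‖g s‖)
        ≤ (1/γ) * T ^ γ * ‖g 0‖ + (T/γ) * ∫ s in (0:ℝ)..T, (T - s) ^ (γ - 1) * ‖g' s‖ :=
          hstep
      _ ≤ (1/γ) * T ^ γ * ‖g 0‖ + (T/γ) * ((1/γ)^n * (S' + T ^ n * B)) := by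
          apply add_le_add_right
          apply mul_le_mul_of_nonneg_left hIH (by positivity)
      _ ≤ (1/γ)^(n+1) * (T ^ γ * ‖g 0‖) + (1/γ)^(n+1) * (T * S' + T ^ (n+1) * B) := by
          apply add_le_add
          · rw [mul_assoc]
            apply mul_le_mul_of_nonneg_right hpow
              (mul_nonneg (Real.rpow_nonneg hT.le _) (norm_nonneg _))
          · have : (T/γ) * ((1/γ)^n * (S' + T ^ n * B))
                = (1/γ)^(n+1) * (T * S' + T ^ (n+1) * B) := by
              rw [pow_succ]
              field_simp
              ring
            rw [this]
      _ = (1/γ)^(n+1) * ((T ^ γ * ‖g 0‖ + T * S') + T ^ (n+1) * B) := by ring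
      _ = (1/γ)^(n+1) * ((∑ j ∈ Finset.range (n + 1),
            T ^ (γ + (j : ℝ)) * ‖iteratedDerivWithin (m + j) f (Icc 0 T) 0‖)
          + T ^ (n+1) * B) := by rw [hsum]

/-- Taylor-expansion estimate for lower-order derivatives under a weakly singular
weight: the constant `c` depends only on `k` and `γ`. -/
theorem taylor_weighted_integral_bound
    (k : ℕ) (hk : 1 ≤ k) (γ : ℝ) (hγ0 : 0 < γ) (hγ1 : γ ≤ 1) :
    ∃ c : ℝ, 0 < c ∧
      ∀ (V : Type) [NormedAddCommGroup V] [NormedSpace ℝ V] [CompleteSpace V]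
        (tstar : ℝ), 0 < tstar →
      ∀ (m : ℕ), m < k →
      ∀ f : ℝ → V, ContDiffOn ℝ (k : ℕ) f (Set.Icc 0 tstar) →
        (∫ s in (0:ℝ)..tstar,
            (tstar - s) ^ (γ - 1) * ‖iteratedDerivWithin m f (Set.Icc 0 tstar) s‖)
          ≤ c * ∑ j ∈ Finset.range (k - m),
              tstar ^ (γ + (j : ℝ)) * ‖iteratedDerivWithin (m + j) f (Set.Icc 0 tstar) 0‖
            + c * tstar ^ (k - m) *
              ∫ s in (0:ℝ)..tstar,
                (tstar - s) ^ (γ - 1) * ‖iteratedDerivWithin k f (Set.Icc 0 tstar) s‖ := by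
  refine ⟨(1/γ)^k, by positivity, ?_⟩
  intro V _ _ _ T hT m hm f hf
  have hγinv : (1:ℝ) ≤ 1/γ := by
    rw [le_div_iff₀ hγ0]; linarith
  have h := main_aux k γ hγ0 hγ1 T hT f hf (k - m) m (by omega)
  set S := ∑ j ∈ Finset.range (k - m),
      T ^ (γ + (j : ℝ)) * ‖iteratedDerivWithin (m + j) f (Set.Icc 0 T) 0‖ with hS
  set B := ∫ s in (0:ℝ)..T, (T - s) ^ (γ - 1) * ‖iteratedDerivWithin k f (Set.Icc 0 T) s‖
    with hB
  have hSnonneg : 0 ≤ S := Finset.sum_nonneg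
    (fun j _ => mul_nonneg (Real.rpow_nonneg hT.le _) (norm_nonneg _))
  have hBnonneg : 0 ≤ B := intervalIntegral.integral_nonneg hT.le
    (fun s hs => mul_nonneg (Real.rpow_nonneg (by linarith [hs.2]) _) (norm_nonneg _))
  have hpow : (1/γ)^(k - m) ≤ (1/γ)^k := pow_le_pow_right₀ hγinv (by omega)
  calc (∫ s in (0:ℝ)..T, (T - s) ^ (γ - 1) * ‖iteratedDerivWithin m f (Set.Icc 0 T) s‖)
      ≤ (1/γ)^(k - m) * (S + T ^ (k - m) * B) := h
    _ = (1/γ)^(k - m) * S + (1/γ)^(k - m) * T ^ (k - m) * B := by ring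
    _ ≤ (1/γ)^k * S + (1/γ)^k * T ^ (k - m) * B := by
        apply add_le_add
        · exact mul_le_mul_of_nonneg_right hpow hSnonneg
        · apply mul_le_mul_of_nonneg_right _ hBnonneg
          exact mul_le_mul_of_nonneg_right hpow (by positivity)
end
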